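/- (Sublinear additive error from a universal near-additive bound) Let k ≥ 2 and d ≥ k^{k−1} be real numbers, and let D be a real number such that D ≤ (1+ε)·d + (k/ε)^{k−2} for every real ε with 0 < ε ≤ 1. Then D ≤ d + 2·k·d^{1 − 1/(k−1)}. -/
import Mathlib


/-- **Sublinear additive error from a universal near-additive bound.**
Let `k ≥ 2` and `d ≥ k^(k-1)` be real numbers, and let `D` be a real number such that
`D ≤ (1+ε)·d + (k/ε)^(k-2)` for every `0 < ε ≤ 1`. Then `D ≤ d + 2·k·d^(1 - 1/(k-1))`.
(All powers are real powers.) -/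
theorem sublinear_additive_error_from_universal_bound (k d D : ℝ)
    (hk : 2 ≤ k) (hd : k ^ (k - 1) ≤ d)
    (hD : ∀ ε : ℝ, 0 < ε → ε ≤ 1 → D ≤ (1 + ε) * d + (k / ε) ^ (k - 2)) :
    D ≤ d + 2 * k * d ^ (1 - 1 / (k - 1)) := by
  have hk1 : (0:ℝ) < k := by linarith
  have hk2 : (0:ℝ) < k - 1 := by linarith
  have hdpos : (0:ℝ) < d := lt_of_lt_of_le (Real.rpow_pos_of_pos hk1 _) hd
  set e : ℝ := 1 / (k - 1) with he
  have hepos : 0 < e := by positivity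
  have hdepos : 0 < d ^ e := Real.rpow_pos_of_pos hdpos e
  have hde : k ≤ d ^ e := by
    have h1 : (k ^ (k - 1)) ^ e = k := by
      rw [← Real.rpow_mul hk1.le, he, mul_one_div, div_self hk2.ne', Real.rpow_one]
    calc k = (k ^ (k - 1)) ^ e := h1.symm
      _ ≤ d ^ e := Real.rpow_le_rpow (by positivity) hd hepos.le
  set ε : ℝ := k / d ^ e with hε
  have hεpos : 0 < ε := by positivity
  have hεle : ε ≤ 1 := by
    rw [hε, div_le_one hdepos]; exact hde
  have key := hD ε hεpos hεle
  have hke : k / ε = d ^ e := by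
    rw [hε]; field_simp
  have hpow : (k / ε) ^ (k - 2) = d ^ (1 - e) := by
    rw [hke, ← Real.rpow_mul hdpos.le]
    congr 1
    rw [he]; field_simp; ring
  have hεd : ε * d = k * d ^ (1 - e) := by
    rw [hε, Real.rpow_sub hdpos, Real.rpow_one]
    field_simp
  have hne : 0 ≤ d ^ (1 - e) := by positivity
  calc D ≤ (1 + ε) * d + (k / ε) ^ (k - 2) := key
    _ = d + k * d ^ (1 - e) + d ^ (1 - e) := by rw [hpow]; nlinarith [hεd]
    _ ≤ d + 2 * k * d ^ (1 - e) := by nlinarith
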